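/- Let z ≥ 1 be a real number and k ≥ 1 an integer. Then for every positive integer n ≤ 2z^k, Λ(n) = Σ_{j=1}^{k} (−1)^{j−1} C(k,j) Σ_{n_1 n_2 ⋯ n_{2j} = n, n_{j+1} ≤ z, …, n_{2j} ≤ z} (log n_1) μ(n_{j+1}) ⋯ μ(n_{2j}), where the inner sum runs over all 2j-tuples of positive integers (n_1,…,n_{2j}) with product n such that each of n_{j+1},…,n_{2j} is at most z. -/

import Mathlib

open Classical ArithmeticFunction Finset ArithmeticFunction.Moebius
open scoped ArithmeticFunction.zeta



lemma hb_sub_apply (f g : ArithmeticFunction ℝ) (n : ℕ) : (f - g) n = f n - g n := rfl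

lemma hb_neg_apply (f : ArithmeticFunction ℝ) (n : ℕ) : (-f) n = -(f n) := rfl

lemma hb_sum_apply {ι : Type*} (s : Finset ι) (f : ι → ArithmeticFunction ℝ) (n : ℕ) :
    (∑ i ∈ s, f i) n = ∑ i ∈ s, f i n := by
  induction s using Finset.cons_induction with
  | empty => simp
  | cons a s h ih => rw [Finset.sum_cons, ArithmeticFunction.add_apply, ih, Finset.sum_cons]

lemma hb_prod_apply (d : ℕ) (f : Fin d → ArithmeticFunction ℝ) (n : ℕ) :
    (∏ i, f i) n = ∑ v ∈ Nat.finMulAntidiag d n, ∏ i, f i (v i) := by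
  induction d generalizing n with
  | zero =>
    simp only [Finset.univ_eq_empty, Finset.prod_empty, ArithmeticFunction.one_apply]
    rcases eq_or_ne n 1 with rfl | hn
    · have h : Nat.finMulAntidiag 0 1 = {fun _ => 1} := by
        ext v
        simp [Nat.mem_finMulAntidiag, Subsingleton.elim v (fun _ => 1)]
      rw [if_pos rfl, h, Finset.sum_singleton]
    · have h : Nat.finMulAntidiag 0 n = ∅ := by
        ext v
        simp only [Nat.mem_finMulAntidiag, Finset.notMem_empty, iff_false]
        rintro ⟨hv, -⟩
        exact hn (by simpa using hv.symm)
      rw [if_neg hn, h, Finset.sum_empty]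
  | succ d ih =>
    rw [Fin.prod_univ_succ, ArithmeticFunction.mul_apply]
    simp_rw [ih, Finset.mul_sum]
    rw [Finset.sum_sigma']
    refine Finset.sum_nbij' (i := fun a => Fin.cons a.1.1 a.2)
      (j := fun v => ⟨(v 0, ∏ i : Fin d, v i.succ), fun i => v i.succ⟩)
      ?_ ?_ ?_ ?_ ?_
    · rintro ⟨⟨p1, p2⟩, v⟩ hmem
      simp only [Finset.mem_sigma, Nat.mem_divisorsAntidiagonal, Nat.mem_finMulAntidiag] at hmem
      rw [Nat.mem_finMulAntidiag]
      refine ⟨?_, hmem.1.2⟩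
      rw [Fin.prod_univ_succ]
      simp only [Fin.cons_zero, Fin.cons_succ]
      rw [hmem.2.1, hmem.1.1]
    · intro v hv
      rw [Nat.mem_finMulAntidiag] at hv
      have hp : v 0 * ∏ i : Fin d, v i.succ = n := by
        rw [← hv.1, Fin.prod_univ_succ]
      have hne : (∏ i : Fin d, v i.succ) ≠ 0 := by
        intro h0
        exact hv.2 (by rw [← hp, h0, mul_zero])
      simp only [Finset.mem_sigma, Nat.mem_divisorsAntidiagonal, Nat.mem_finMulAntidiag]
      exact ⟨⟨hp, hv.2⟩, trivial, hne⟩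
    · rintro ⟨⟨p1, p2⟩, v⟩ hmem
      simp only [Finset.mem_sigma, Nat.mem_divisorsAntidiagonal, Nat.mem_finMulAntidiag] at hmem
      have h3 : (fun i : Fin d => (Fin.cons p1 v : Fin (d+1) → ℕ) i.succ) = v :=
        funext fun i => Fin.cons_succ _ _ _
      have h2 : (∏ i : Fin d, (Fin.cons p1 v : Fin (d+1) → ℕ) i.succ) = p2 := by
        rw [h3]; exact hmem.2.1
      simp only [Fin.cons_zero, h2, h3]
    · intro v hv
      simp only
      exact Fin.cons_self_tail v
    · rintro ⟨⟨p1, p2⟩, v⟩ hmem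
      rw [Fin.prod_univ_succ]
      simp only [Fin.cons_zero, Fin.cons_succ]



noncomputable def hbg (z : ℝ) : ArithmeticFunction ℝ :=
  ⟨fun m => if (m : ℝ) ≤ z then (μ m : ℝ) else 0, by simp⟩

lemma hbg_apply (z : ℝ) (m : ℕ) : hbg z m = if (m : ℝ) ≤ z then (μ m : ℝ) else 0 := rfl

noncomputable def hbx (z : ℝ) : ArithmeticFunction ℝ := (↑ζ : ArithmeticFunction ℝ) * hbg z

lemma hb_one_sub_eval (z : ℝ) (m : ℕ) (hm : (m : ℝ) ≤ z) : (1 - hbx z) m = 0 := by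
  rcases Nat.eq_zero_or_pos m with rfl | hm0
  · simp [hb_sub_apply]
  · rw [hb_sub_apply, hbx, ArithmeticFunction.coe_zeta_mul_apply]
    have hg' : ∀ i ∈ m.divisors, hbg z i = ((μ i : ℤ) : ℝ) := by
      intro i hi
      rw [Nat.mem_divisors] at hi
      have : (i : ℝ) ≤ z :=
        le_trans (Nat.cast_le.mpr (Nat.le_of_dvd hm0 hi.1)) hm
      rw [hbg_apply, if_pos this]
    rw [Finset.sum_congr rfl hg']
    have h2 := congrArg (fun f : ArithmeticFunction ℝ => f m)
      (ArithmeticFunction.coe_moebius_mul_coe_zeta (R := ℝ))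
    rw [ArithmeticFunction.coe_mul_zeta_apply] at h2
    simp only [ArithmeticFunction.intCoe_apply] at h2
    rw [h2, sub_self]

lemma hb_pow_eval (z : ℝ) (hz : 1 ≤ z) : ∀ (t m : ℕ),
    ((1 - hbx z) ^ (t + 1)) m ≠ 0 → z ^ (t + 1) < (m : ℝ) := by
  intro t
  induction t with
  | zero =>
    intro m h
    rw [pow_one] at h
    by_contra hc
    push_neg at hc
    rw [pow_one] at hc
    exact h (hb_one_sub_eval z m hc)
  | succ t iht =>
    intro m h
    rw [pow_succ'] at h
    rw [ArithmeticFunction.mul_apply] at h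
    obtain ⟨p, hp, hne⟩ := Finset.exists_ne_zero_of_sum_ne_zero h
    rw [Nat.mem_divisorsAntidiagonal] at hp
    have h1 : (1 - hbx z) p.1 ≠ 0 := fun h0 => hne (by rw [h0, zero_mul])
    have h2 : ((1 - hbx z) ^ (t + 1)) p.2 ≠ 0 := fun h0 => hne (by rw [h0, mul_zero])
    have hz1 : z < (p.1 : ℝ) := by
      by_contra hc
      push_neg at hc
      exact h1 (hb_one_sub_eval z p.1 hc)
    have hz2 := iht p.2 h2
    have hcast : (m : ℝ) = (p.1 : ℝ) * (p.2 : ℝ) := by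
      rw [← hp.1]; push_cast; ring
    rw [pow_succ', hcast]
    have h0z : (0 : ℝ) ≤ z := by linarith
    exact mul_lt_mul'' hz1 hz2 h0z (by positivity)

lemma hb_rem (z : ℝ) (hz : 1 ≤ z) (k : ℕ) (hk : 1 ≤ k) (n : ℕ)
    (hnz : (n : ℝ) ≤ 2 * z ^ k) : (Λ * (1 - hbx z) ^ k) n = 0 := by
  rw [ArithmeticFunction.mul_apply]
  apply Finset.sum_eq_zero
  intro p hp
  rw [Nat.mem_divisorsAntidiagonal] at hp
  by_contra hne
  have h1 : Λ p.1 ≠ 0 := fun h0 => hne (by rw [h0, zero_mul])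
  have h2 : ((1 - hbx z) ^ k) p.2 ≠ 0 := fun h0 => hne (by rw [h0, mul_zero])
  have hp1 : 2 ≤ p.1 := by
    have e0 : p.1 ≠ 0 := fun h0 => h1 (by rw [h0, ArithmeticFunction.map_zero])
    have e1 : p.1 ≠ 1 := fun h0 => h1 (by rw [h0, ArithmeticFunction.vonMangoldt_apply_one])
    omega
  obtain ⟨t, rfl⟩ : ∃ t, k = t + 1 := ⟨k - 1, by omega⟩
  have hz2 := hb_pow_eval z hz t p.2 h2
  have hcast : (n : ℝ) = (p.1 : ℝ) * (p.2 : ℝ) := by rw [← hp.1]; push_cast; ring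
  have h2r : (2 : ℝ) ≤ (p.1 : ℝ) := by exact_mod_cast hp1
  have hzp : (0 : ℝ) < z ^ (t + 1) := by positivity
  nlinarith


lemma hb_natCast_mul_apply (m : ℕ) (f : ArithmeticFunction ℝ) (n : ℕ) :
    (((m : ℕ) : ArithmeticFunction ℝ) * f) n = (m : ℝ) * f n := by
  induction m with
  | zero => simp
  | succ m ih =>
    push_cast
    rw [add_mul, one_mul, ArithmeticFunction.add_apply, ih, add_mul, one_mul]

lemma hb_neg_one_pow_mul_apply (j : ℕ) (f : ArithmeticFunction ℝ) (n : ℕ) :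
    (((-1 : ArithmeticFunction ℝ)) ^ j * f) n = (-1 : ℝ) ^ j * f n := by
  induction j with
  | zero => simp
  | succ j ih =>
    have h : ((-1 : ArithmeticFunction ℝ)) ^ (j + 1) * f
        = -(((-1 : ArithmeticFunction ℝ)) ^ j * f) := by ring
    rw [h]
    show -((((-1 : ArithmeticFunction ℝ)) ^ j * f) n) = _
    rw [ih]
    ring

lemma hb_card_filter (N : ℕ) (p : ℕ → Prop) [DecidablePred p] :
    (Finset.univ.filter (fun i : Fin N => p i.val)).card
      = ((Finset.range N).filter p).card := by
  rw [Finset.card_filter, Finset.card_filter]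
  exact Fin.sum_univ_eq_sum_range (fun a => if p a then 1 else 0) N

lemma hb_binom (x : ArithmeticFunction ℝ) (k : ℕ) :
    (1 : ArithmeticFunction ℝ) - (1 - x) ^ k
      = ∑ j ∈ Finset.range k,
          (-1 : ArithmeticFunction ℝ) ^ j * ((k.choose (j + 1) : ℕ) : ArithmeticFunction ℝ)
            * x ^ (j + 1) := by
  have hexp : ((1 : ArithmeticFunction ℝ) - x) ^ k
      = ∑ m ∈ Finset.range (k + 1),
          (-1 : ArithmeticFunction ℝ) ^ m * ((k.choose m : ℕ) : ArithmeticFunction ℝ) * x ^ m := by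
    have h := add_pow (-x) (1 : ArithmeticFunction ℝ) k
    rw [neg_add_eq_sub] at h
    rw [h]
    refine Finset.sum_congr rfl fun m _ => ?_
    have hnx : (-x) = (-1 : ArithmeticFunction ℝ) * x := by ring
    rw [one_pow, hnx, mul_pow]
    ring
  rw [hexp, Finset.sum_range_succ']
  simp only [pow_zero, one_mul, Nat.choose_zero_right, Nat.cast_one, mul_one]
  have habel : ∀ S : ArithmeticFunction ℝ, (1 : ArithmeticFunction ℝ) - (S + 1) = -S := by
    intro S; ring
  rw [habel, ← Finset.sum_neg_distrib]
  refine Finset.sum_congr rfl fun j _ => ?_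
  rw [pow_succ]
  ring


lemma hbx_def (z : ℝ) : hbx z = (↑ζ : ArithmeticFunction ℝ) * hbg z := rfl

lemma hb_term (z : ℝ) (j n : ℕ) (hn : 0 < n) :
    (Λ * (hbx z) ^ (j + 1)) n
      = ∑ v ∈ (Fintype.piFinset fun _ : Fin (2 * (j + 1)) => Finset.Icc 1 n).filter
            (fun v => (∏ i, v i) = n ∧
              ∀ i : Fin (2 * (j + 1)), j + 1 ≤ (i : ℕ) → (v i : ℝ) ≤ z),
          Real.log (v ⟨0, by omega⟩) *
            ∏ i ∈ Finset.univ.filter (fun i : Fin (2 * (j + 1)) => j + 1 ≤ (i : ℕ)),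
              (μ (v i) : ℝ) := by
  have hLx : Λ * (hbx z) ^ (j + 1)
      = ArithmeticFunction.log * (↑ζ : ArithmeticFunction ℝ) ^ j * (hbg z) ^ (j + 1) := by
    rw [← ArithmeticFunction.vonMangoldt_mul_zeta, hbx_def]
    ring
  set F : Fin (2 * (j + 1)) → ArithmeticFunction ℝ := fun i =>
    if (i : ℕ) = 0 then ArithmeticFunction.log
    else if (i : ℕ) < j + 1 then (↑ζ : ArithmeticFunction ℝ) else hbg z with hF
  have hA0 : Finset.univ.filter (fun i : Fin (2 * (j + 1)) => (i : ℕ) < j + 1 ∧ (i : ℕ) = 0)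
      = {(⟨0, by omega⟩ : Fin (2 * (j + 1)))} := by
    ext i
    simp only [Finset.mem_filter, Finset.mem_univ, true_and, Finset.mem_singleton, Fin.ext_iff]
    omega
  have hcard1 : (Finset.univ.filter
      (fun i : Fin (2 * (j + 1)) => (i : ℕ) < j + 1 ∧ ¬ (i : ℕ) = 0)).card = j := by
    rw [hb_card_filter (2 * (j + 1)) (fun a => a < j + 1 ∧ ¬ a = 0)]
    have : (Finset.range (2 * (j + 1))).filter (fun a => a < j + 1 ∧ ¬ a = 0)
        = Finset.Ico 1 (j + 1) := by
      ext a
      simp only [Finset.mem_filter, Finset.mem_range, Finset.mem_Ico]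
      omega
    rw [this, Nat.card_Ico]
    omega
  have hcard2 : (Finset.univ.filter
      (fun i : Fin (2 * (j + 1)) => ¬ (i : ℕ) < j + 1)).card = j + 1 := by
    rw [hb_card_filter (2 * (j + 1)) (fun a => ¬ a < j + 1)]
    have : (Finset.range (2 * (j + 1))).filter (fun a => ¬ a < j + 1)
        = Finset.Ico (j + 1) (2 * (j + 1)) := by
      ext a
      simp only [Finset.mem_filter, Finset.mem_range, Finset.mem_Ico]
      omega
    rw [this, Nat.card_Ico]
    omega
  have hsplit : ∀ G : Fin (2 * (j + 1)) → ℝ, (∏ i, G i)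
      = G ⟨0, by omega⟩
        * (∏ i ∈ Finset.univ.filter
            (fun i : Fin (2 * (j + 1)) => (i : ℕ) < j + 1 ∧ ¬ (i : ℕ) = 0), G i)
        * (∏ i ∈ Finset.univ.filter (fun i : Fin (2 * (j + 1)) => ¬ (i : ℕ) < j + 1), G i) := by
    intro G
    rw [← Finset.prod_filter_mul_prod_filter_not Finset.univ
      (fun i : Fin (2 * (j + 1)) => (i : ℕ) < j + 1) G,
      ← Finset.prod_filter_mul_prod_filter_not (Finset.univ.filter
        (fun i : Fin (2 * (j + 1)) => (i : ℕ) < j + 1)) (fun i => (i : ℕ) = 0) G,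
      Finset.filter_filter, Finset.filter_filter, hA0, Finset.prod_singleton]
  have hsplitAF : ∀ G : Fin (2 * (j + 1)) → ArithmeticFunction ℝ, (∏ i, G i)
      = G ⟨0, by omega⟩
        * (∏ i ∈ Finset.univ.filter
            (fun i : Fin (2 * (j + 1)) => (i : ℕ) < j + 1 ∧ ¬ (i : ℕ) = 0), G i)
        * (∏ i ∈ Finset.univ.filter (fun i : Fin (2 * (j + 1)) => ¬ (i : ℕ) < j + 1), G i) := by
    intro G
    rw [← Finset.prod_filter_mul_prod_filter_not Finset.univ
      (fun i : Fin (2 * (j + 1)) => (i : ℕ) < j + 1) G,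
      ← Finset.prod_filter_mul_prod_filter_not (Finset.univ.filter
        (fun i : Fin (2 * (j + 1)) => (i : ℕ) < j + 1)) (fun i => (i : ℕ) = 0) G,
      Finset.filter_filter, Finset.filter_filter, hA0, Finset.prod_singleton]
  have hFprod : (∏ i, F i)
      = ArithmeticFunction.log * (↑ζ : ArithmeticFunction ℝ) ^ j * (hbg z) ^ (j + 1) := by
    rw [hsplitAF F]
    have h0 : F ⟨0, by omega⟩ = ArithmeticFunction.log := by simp [hF]
    have h1 : (∏ i ∈ Finset.univ.filter
        (fun i : Fin (2 * (j + 1)) => (i : ℕ) < j + 1 ∧ ¬ (i : ℕ) = 0), F i)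
        = (↑ζ : ArithmeticFunction ℝ) ^ j := by
      rw [Finset.prod_congr rfl (fun i hi => ?_), Finset.prod_const, hcard1]
      rw [Finset.mem_filter] at hi
      rw [hF]
      simp only
      rw [if_neg hi.2.2, if_pos hi.2.1]
    have h2 : (∏ i ∈ Finset.univ.filter
        (fun i : Fin (2 * (j + 1)) => ¬ (i : ℕ) < j + 1), F i) = (hbg z) ^ (j + 1) := by
      rw [Finset.prod_congr rfl (fun i hi => ?_), Finset.prod_const, hcard2]
      rw [Finset.mem_filter] at hi
      rw [hF]
      simp only
      rw [if_neg (by omega), if_neg hi.2]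
    rw [h0, h1, h2]
  have hset : (Fintype.piFinset fun _ : Fin (2 * (j + 1)) => Finset.Icc 1 n).filter
        (fun v => (∏ i, v i) = n ∧
          ∀ i : Fin (2 * (j + 1)), j + 1 ≤ (i : ℕ) → (v i : ℝ) ≤ z)
      = (Nat.finMulAntidiag (2 * (j + 1)) n).filter
        (fun v => ∀ i : Fin (2 * (j + 1)), j + 1 ≤ (i : ℕ) → (v i : ℝ) ≤ z) := by
    ext v
    simp only [Finset.mem_filter, Fintype.mem_piFinset, Finset.mem_Icc, Nat.mem_finMulAntidiag]
    constructor
    · rintro ⟨hpi, hprod, hQ⟩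
      exact ⟨⟨hprod, hn.ne'⟩, hQ⟩
    · rintro ⟨⟨hprod, hne⟩, hQ⟩
      refine ⟨fun i => ?_, hprod, hQ⟩
      have hdvd : v i ∣ n := hprod ▸ Finset.dvd_prod_of_mem v (Finset.mem_univ i)
      have hvne : v i ≠ 0 := by
        intro h0
        exact hne (by rw [← hprod]; exact Finset.prod_eq_zero (Finset.mem_univ i) h0)
      exact ⟨by omega, Nat.le_of_dvd hn hdvd⟩
  rw [hLx, ← hFprod, hb_prod_apply, hset, Finset.sum_filter]
  refine Finset.sum_congr rfl fun v hv => ?_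
  rw [Nat.mem_finMulAntidiag] at hv
  have hvne : ∀ i, v i ≠ 0 := by
    intro i h0
    exact hv.2 (by rw [← hv.1]; exact Finset.prod_eq_zero (Finset.mem_univ i) h0)
  rw [hsplit (fun i => F i (v i))]
  have h0 : F ⟨0, by omega⟩ (v ⟨0, by omega⟩) = Real.log (v ⟨0, by omega⟩) := by
    rw [hF]
    simp only [if_pos rfl]
    exact ArithmeticFunction.log_apply
  have h1 : (∏ i ∈ Finset.univ.filter
      (fun i : Fin (2 * (j + 1)) => (i : ℕ) < j + 1 ∧ ¬ (i : ℕ) = 0), F i (v i)) = 1 := by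
    apply Finset.prod_eq_one
    intro i hi
    rw [Finset.mem_filter] at hi
    rw [hF]
    simp only
    rw [if_neg hi.2.2, if_pos hi.2.1, ArithmeticFunction.natCoe_apply,
      ArithmeticFunction.zeta_apply_ne (hvne i), Nat.cast_one]
  have hfilter_eq : Finset.univ.filter (fun i : Fin (2 * (j + 1)) => ¬ (i : ℕ) < j + 1)
      = Finset.univ.filter (fun i : Fin (2 * (j + 1)) => j + 1 ≤ (i : ℕ)) := by
    ext i
    simp only [Finset.mem_filter, Finset.mem_univ, true_and, Nat.not_lt]
  rw [h0, h1, mul_one]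
  have hprodset : (∏ i ∈ Finset.univ.filter
      (fun i : Fin (2 * (j + 1)) => ¬ (i : ℕ) < j + 1), F i (v i))
      = ∏ i ∈ Finset.univ.filter
        (fun i : Fin (2 * (j + 1)) => j + 1 ≤ (i : ℕ)), F i (v i) :=
    Finset.prod_congr hfilter_eq fun _ _ => rfl
  rw [hprodset]
  by_cases hQ : ∀ i : Fin (2 * (j + 1)), j + 1 ≤ (i : ℕ) → (v i : ℝ) ≤ z
  · rw [if_pos hQ]
    congr 1
    refine Finset.prod_congr rfl fun i hi => ?_
    rw [Finset.mem_filter] at hi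
    rw [hF]
    simp only
    rw [if_neg (by omega), if_neg (by omega), hbg_apply, if_pos (hQ i hi.2)]
  · rw [if_neg hQ]
    push_neg at hQ
    obtain ⟨i0, hi0, hgt⟩ := hQ
    have : F i0 (v i0) = 0 := by
      rw [hF]
      simp only
      rw [if_neg (by omega), if_neg (by omega), hbg_apply, if_neg (not_le.mpr hgt)]
    rw [Finset.prod_eq_zero (Finset.mem_filter.mpr ⟨Finset.mem_univ i0, hi0⟩) this, mul_zero]

theorem heath_brown_identity
    (z : ℝ) (hz : 1 ≤ z) (k : ℕ) (hk : 1 ≤ k) (n : ℕ) (hn : 0 < n)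
    (hnz : (n : ℝ) ≤ 2 * z ^ k) :
    (Λ n : ℝ) =
      ∑ j ∈ Finset.range k, (-1 : ℝ) ^ j * (k.choose (j + 1) : ℝ) *
        ∑ v ∈ (Fintype.piFinset fun _ : Fin (2 * (j + 1)) => Finset.Icc 1 n).filter
            (fun v => (∏ i, v i) = n ∧
              ∀ i : Fin (2 * (j + 1)), j + 1 ≤ (i : ℕ) → (v i : ℝ) ≤ z),
          Real.log (v ⟨0, by omega⟩) *
            ∏ i ∈ Finset.univ.filter (fun i : Fin (2 * (j + 1)) => j + 1 ≤ (i : ℕ)),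
              (μ (v i) : ℝ) := by
  have key : (Λ : ArithmeticFunction ℝ) = Λ * (1 - hbx z) ^ k
      + ∑ j ∈ Finset.range k,
          (-1 : ArithmeticFunction ℝ) ^ j * ((k.choose (j + 1) : ℕ) : ArithmeticFunction ℝ)
            * (Λ * (hbx z) ^ (j + 1)) := by
    calc (Λ : ArithmeticFunction ℝ) = Λ * ((1 - hbx z) ^ k + (1 - (1 - hbx z) ^ k)) := by
          rw [show (1 - hbx z) ^ k + ((1 : ArithmeticFunction ℝ) - (1 - hbx z) ^ k)
            = 1 from by ring, mul_one]
      _ = Λ * (1 - hbx z) ^ k + Λ * ((1 : ArithmeticFunction ℝ) - (1 - hbx z) ^ k) := by ring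
      _ = _ := by
          rw [hb_binom, Finset.mul_sum]
          exact congrArg _ (Finset.sum_congr rfl fun j _ => by ring)
  have hval := congrArg (fun f : ArithmeticFunction ℝ => f n) key
  rw [ArithmeticFunction.add_apply, hb_rem z hz k hk n hnz, zero_add, hb_sum_apply] at hval
  rw [hval]
  refine Finset.sum_congr rfl fun j hj => ?_
  rw [mul_assoc, hb_neg_one_pow_mul_apply, hb_natCast_mul_apply, hb_term z j n hn, ← mul_assoc]
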